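/- arXiv:1703.00080 — 4 statements merged into one kernel-verified Lean document; each statement's English description precedes it below -/
import Mathlib

section
/- Score-bound early termination is correct: let S be a finite set of Boolean tuples over m attributes and t a Boolean tuple. (i) If F(s) ≤ F(t) for every s ∈ S, then no member of S dominates t. (ii) If F(t) ≤ F(s) for every s ∈ S, then t dominates no member of S. (Hence subtrees whose maxScore is below the current score cannot contain dominators of t, and subtrees whose minScore is above the current score cannot contain tuples dominated by t.) -/
/-- Tuple `t` dominates `t'`: `t` is at least as good on every attribute and
strictly better on at least one. -/
def dominates {m : ℕ} (t t' : Fin m → ℕ) : Prop :=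
  (∀ i, t' i ≤ t i) ∧ ∃ i, t' i < t i

/-- A Boolean tuple has every attribute value in `{0, 1}`. -/
def IsBoolean {m : ℕ} (t : Fin m → ℕ) : Prop :=
  ∀ i, t i = 0 ∨ t i = 1

/-- The binary score `F(t) = Σ_{i<m} 2^i · t i`. -/
def score {m : ℕ} (t : Fin m → ℕ) : ℕ :=
  ∑ i : Fin m, 2 ^ (i : ℕ) * t i

lemma score_lt_of_dominates {m : ℕ} {t t' : Fin m → ℕ} (h : dominates t t') :
    score t' < score t := by
  obtain ⟨hle, i, hlt⟩ := h
  apply Finset.sum_lt_sum (fun j _ => Nat.mul_le_mul_left _ (hle j))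
  exact ⟨i, Finset.mem_univ i, by
    have : (0:ℕ) < 2 ^ (i:ℕ) := Nat.pow_pos (by norm_num)
    exact (Nat.mul_lt_mul_left this).mpr hlt⟩

/-- Score-bound early termination is correct:
(i) if every score in `S` is at most `F(t)`, no member of `S` dominates `t`;
(ii) if `F(t)` is at most every score in `S`, then `t` dominates no member of `S`. -/
theorem score_bound_early_termination {m : ℕ} (S : Finset (Fin m → ℕ))
    (t : Fin m → ℕ) (ht : IsBoolean t) (hS : ∀ s ∈ S, IsBoolean s) :
    ((∀ s ∈ S, score s ≤ score t) → ∀ s ∈ S, ¬ dominates s t) ∧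
    ((∀ s ∈ S, score t ≤ score s) → ∀ s ∈ S, ¬ dominates t s) := by
  constructor
  · intro h s hs hd
    exact absurd (h s hs) (not_le.mpr (score_lt_of_dominates hd))
  · intro h s hs hd
    exact absurd (h s hs) (not_le.mpr (score_lt_of_dominates hd))
end

section
/- The TA-SKY stopping condition is correct: let D be a finite set of tuples over m attributes, let Seen ⊆ D, and let c be a threshold tuple such that every tuple t ∈ D \ Seen satisfies t i ≤ c i for every attribute i (as guaranteed by descending sorted access). If some tuple s ∈ Seen dominates c, then s dominates every tuple in D \ Seen; consequently the skyline S(D) is contained in Seen, and TA-SKY can stop without accessing the remaining tuples. -/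
/-- The skyline of a finite set `D` of tuples: members of `D` not dominated by
any member of `D`. -/
def skyline {m : ℕ} (D : Finset (Fin m → ℕ)) : Set (Fin m → ℕ) :=
  {t | t ∈ D ∧ ∀ s ∈ D, ¬ dominates s t}

/-- The TA-SKY stopping condition is correct: if every unseen tuple is bounded
above by the threshold tuple `c` on every attribute, and some seen tuple `s`
dominates `c`, then `s` dominates every unseen tuple; consequently the skyline
of `D` is contained in `Seen`. -/
theorem tasky_stopping_condition {m : ℕ} (D Seen : Finset (Fin m → ℕ))
    (hsub : Seen ⊆ D) (c : Fin m → ℕ)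
    (hc : ∀ t ∈ D, t ∉ Seen → ∀ i, t i ≤ c i)
    (s : Fin m → ℕ) (hs : s ∈ Seen) (hdom : dominates s c) :
    (∀ t ∈ D, t ∉ Seen → dominates s t) ∧ (∀ t ∈ skyline D, t ∈ Seen) := by
  obtain ⟨hle, i, hi⟩ := hdom
  have key : ∀ t ∈ D, t ∉ Seen → dominates s t := by
    intro t htD htS
    exact ⟨fun j => le_trans (hc t htD htS j) (hle j),
      ⟨i, lt_of_le_of_lt (hc t htD htS i) hi⟩⟩
  refine ⟨key, fun t ht => ?_⟩
  by_contra htS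
  exact ht.2 s (hsub hs) (key t ht.1 htS)
end

section
/- TA-SKY is progressive: let D be a finite set of tuples over m attributes, let Seen ⊆ D, and let c be a threshold tuple such that every tuple u ∈ D \ Seen satisfies u i ≤ c i for every attribute i. If a tuple t ∈ Seen is not dominated by any member of Seen and c does not dominate t, then t belongs to the skyline S(D) (so such tuples may be output as skyline answers before the algorithm terminates). -/
/-- TA-SKY is progressive: if every unseen tuple is bounded above by the
threshold tuple `c` on every attribute, and a seen tuple `t` is dominated
neither by any seen tuple nor by `c`, then `t` is in the skyline of `D`. -/
theorem tasky_progressive {m : ℕ} (D Seen : Finset (Fin m → ℕ))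
    (hsub : Seen ⊆ D) (c : Fin m → ℕ)
    (hc : ∀ u ∈ D, u ∉ Seen → ∀ i, u i ≤ c i)
    (t : Fin m → ℕ) (ht : t ∈ Seen)
    (hnd : ∀ u ∈ Seen, ¬ dominates u t) (hcnd : ¬ dominates c t) :
    t ∈ skyline D := by
  refine ⟨hsub ht, fun s hs hds => ?_⟩
  by_cases hseen : s ∈ Seen
  · exact hnd s hseen hds
  · obtain ⟨hle, i, hi⟩ := hds
    exact hcnd ⟨fun j => (hle j).trans (hc s hs hseen j),
      ⟨i, hi.trans_le (hc s hs hseen i)⟩⟩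
end

section
/- Probability of dominating the maximal unseen combination: let X be a random Boolean tuple over m attributes with independent coordinates where P(X j = 1) = p_j, let Z be a nonempty subset of the attributes, and let v be the Boolean tuple with v i = 0 for i ∈ Z and v i = 1 for i ∉ Z. Then the probability that X dominates v equals (Π_{j∉Z} p_j) · (1 − Π_{j∈Z} (1 − p_j)). -/
open MeasureTheory

/-- The Bernoulli distribution with parameter `p` on `ℕ`, supported on
`{0, 1}` with `P(1) = p`. -/
noncomputable def bernoulliNat (p : ENNReal) (hp : p ≤ 1) : Measure ℕ :=
  ((PMF.bernoulli p.toNNReal (by simpa using ENNReal.toNNReal_mono ENNReal.one_ne_top hp)).map (fun b => if b then 1 else 0)).toMeasure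

lemma bernoulliNat_apply (p : ENNReal) (hp : p ≤ 1) (s : Set ℕ) :
    bernoulliNat p hp s =
      (PMF.bernoulli p.toNNReal (by simpa using ENNReal.toNNReal_mono ENNReal.one_ne_top hp)).toMeasure ((fun b : Bool => if b then (1:ℕ) else 0) ⁻¹' s) := by
  rw [bernoulliNat, ← PMF.toMeasure_map _ _ (measurable_of_countable _),
    Measure.map_apply (measurable_of_countable _) (MeasurableSet.of_discrete)]

lemma bernoulliNat_Ici (p : ENNReal) (hp : p ≤ 1) : bernoulliNat p hp {n | 1 ≤ n} = p := by
  rw [bernoulliNat_apply]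
  have : (fun b : Bool => if b then (1:ℕ) else 0) ⁻¹' {n | 1 ≤ n} = {true} := by
    ext b; cases b <;> simp
  rw [this, PMF.toMeasure_apply_singleton _ _ (by simp)]
  refine (PMF.bernoulli_apply _ _).trans ?_
  simp [ENNReal.coe_toNNReal (ne_top_of_le_ne_top ENNReal.one_ne_top hp)]

lemma bernoulliNat_zero (p : ENNReal) (hp : p ≤ 1) : bernoulliNat p hp {0} = 1 - p := by
  rw [bernoulliNat_apply]
  have : (fun b : Bool => if b then (1:ℕ) else 0) ⁻¹' {0} = {false} := by
    ext b; cases b <;> simp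
  rw [this, PMF.toMeasure_apply_singleton _ _ (by simp)]
  refine (PMF.bernoulli_apply _ _).trans ?_
  simp [ENNReal.coe_toNNReal (ne_top_of_le_ne_top ENNReal.one_ne_top hp)]

lemma bernoulliNat_one (p : ENNReal) (hp : p ≤ 1) : bernoulliNat p hp {1} = p := by
  rw [bernoulliNat_apply]
  have : (fun b : Bool => if b then (1:ℕ) else 0) ⁻¹' {1} = {true} := by
    ext b; cases b <;> simp
  rw [this, PMF.toMeasure_apply_singleton _ _ (by simp)]
  refine (PMF.bernoulli_apply _ _).trans ?_
  simp [ENNReal.coe_toNNReal (ne_top_of_le_ne_top ENNReal.one_ne_top hp)]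

instance bernoulliNat_prob (p : ENNReal) (hp : p ≤ 1) :
    IsProbabilityMeasure (bernoulliNat p hp) := by
  unfold bernoulliNat; infer_instance

/-- Probability of dominating the maximal unseen combination: for a random
Boolean tuple `X` with independent coordinates, `P(X j = 1) = p j`, a nonempty
attribute set `Z`, and `v` the Boolean tuple that is `0` on `Z` and `1` off
`Z`, the probability that `X` dominates `v` is
`(Π_{j∉Z} p_j) · (1 − Π_{j∈Z} (1 − p_j))`. -/
theorem prob_dominates_max_unseen {m : ℕ} (p : Fin m → ENNReal)
    (hp : ∀ j, p j ≤ 1) (Z : Finset (Fin m)) (hZ : Z.Nonempty) :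
    Measure.pi (fun j => bernoulliNat (p j) (hp j))
      {X | dominates X (fun i => if i ∈ Z then (0 : ℕ) else 1)} =
      (∏ j ∈ Zᶜ, p j) * (1 - ∏ j ∈ Z, (1 - p j)) := by
  classical
  set μ := Measure.pi (fun j => bernoulliNat (p j) (hp j)) with hμ
  set v : Fin m → ℕ := fun i => if i ∈ Z then 0 else 1 with hv
  set A : Set (Fin m → ℕ) :=
    Set.univ.pi (fun j => if j ∈ Z then Set.univ else {n | 1 ≤ n}) with hA
  set C : Set (Fin m → ℕ) := Set.univ.pi (fun j => {v j}) with hC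
  have hCsub : C ⊆ A := by
    intro X hX j _
    have := hX j (Set.mem_univ j)
    simp only [Set.mem_singleton_iff] at this
    by_cases h : j ∈ Z <;> simp [h, this, hv]
  have hE : {X | dominates X v} = A \ C := by
    ext X
    simp only [Set.mem_setOf_eq, dominates, Set.mem_diff, hA, hC, Set.mem_pi,
      Set.mem_univ, forall_true_left, Set.mem_singleton_iff, true_implies]
    constructor
    · rintro ⟨hle, i, hlt⟩
      constructor
      · intro j
        by_cases h : j ∈ Z
        · simp [h]
        · have := hle j; simp [h, hv] at this ⊢; omega
      · intro hall
        have := hall i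
        omega
    · rintro ⟨hall, hne⟩
      have hle : ∀ i, v i ≤ X i := by
        intro i
        by_cases h : i ∈ Z
        · simp [hv, h]
        · have := hall i; simp [h, hv] at this ⊢; omega
      refine ⟨hle, ?_⟩
      by_contra hcon
      push_neg at hcon
      exact hne fun i => le_antisymm (hcon i) (hle i)
  have hμA : μ A = ∏ j ∈ Zᶜ, p j := by
    rw [hA, hμ, Measure.pi_pi]
    rw [← Finset.prod_mul_prod_compl Z]
    have h1 : ∀ j ∈ Z, (bernoulliNat (p j) (hp j))
        (if j ∈ Z then Set.univ else {n | 1 ≤ n}) = 1 := by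
      intro j hj; simp [hj]
    have h2 : ∀ j ∈ Zᶜ, (bernoulliNat (p j) (hp j))
        (if j ∈ Z then Set.univ else {n | 1 ≤ n}) = p j := by
      intro j hj
      rw [Finset.mem_compl] at hj
      simp [hj, bernoulliNat_Ici]
    rw [Finset.prod_congr rfl h1, Finset.prod_congr rfl h2, Finset.prod_const_one, one_mul]
  have hμC : μ C = (∏ j ∈ Zᶜ, p j) * ∏ j ∈ Z, (1 - p j) := by
    rw [hC, hμ, Measure.pi_pi]
    rw [← Finset.prod_mul_prod_compl Z, mul_comm]
    congr 1
    · apply Finset.prod_congr rfl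
      intro j hj
      rw [Finset.mem_compl] at hj
      simp [hv, hj, bernoulliNat_one]
    · apply Finset.prod_congr rfl
      intro j hj
      simp [hv, hj, bernoulliNat_zero]
  have hAmeas : MeasurableSet A := MeasurableSet.univ_pi (fun j => MeasurableSet.of_discrete)
  have hCmeas : MeasurableSet C := MeasurableSet.univ_pi (fun j => MeasurableSet.of_discrete)
  have hfin : μ C ≠ ⊤ := (measure_lt_top μ C).ne
  rw [hE, measure_diff hCsub hCmeas.nullMeasurableSet hfin, hμA, hμC]
  have hne : (∏ j ∈ Zᶜ, p j) ≠ ⊤ := by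
    refine (lt_of_le_of_lt ?_ ENNReal.one_lt_top).ne
    exact Finset.prod_le_one (fun j _ => zero_le) (fun j _ => hp j)
  rw [ENNReal.mul_sub (fun _ _ => hne), mul_one]
end
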